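/- Let $\mathcal{A}$ be a $k$-linear Grothendieck abelian category in which every object is the union of its finitely generated subobjects. Let $I$ be a finitely generated object of $\mathcal{A}$ such that every monomorphism $I \to M$ with $M$ finitely generated splits. Then $I$ is an injective object of $\mathcal{A}$. -/

import Mathlib

open CategoryTheory CategoryTheory.Limits

universe v u

/-- An object is finitely generated if whenever it is the supremum of a directed family of
subobjects, it equals one of them. -/
def FinGenObj {C : Type u} [Category.{v} C] [Abelian C] [WellPowered.{v} C] [HasLimits C]
    [HasColimits C] (X : C) : Prop :=
  ∀ S : Set (Subobject X), S.Nonempty → DirectedOn (· ≤ ·) S → Subobject.sSup.{v} S = ⊤ → ⊤ ∈ S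

set_option linter.unusedSectionVars false
set_option maxHeartbeats 1000000

namespace Stmt8Aux

variable {C : Type u} [Category.{v} C] [Abelian C] [WellPowered.{v} C]
  [HasLimits C] [HasColimits C] [AB5 C]

noncomputable instance instCLv {B : C} : CompleteLattice (Subobject B) :=
  Subobject.instCompleteLattice.{v}

noncomputable instance instCSSv {B : C} : CompleteSemilatticeSup (Subobject B) :=
  Subobject.completeSemilatticeSup.{v}

noncomputable instance instCSIv {B : C} : CompleteSemilatticeInf (Subobject B) :=
  Subobject.completeSemilatticeInf.{v}

section ColimitLemma

variable {ι : Type v} [Preorder ι] [IsDirected ι (· ≤ ·)] [Nonempty ι]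

def constCocone (X : C) : Cocone ((Functor.const ι).obj X) where
  pt := X
  ι := { app := fun _ => 𝟙 X, naturality := fun _ _ _ => by simp }

lemma const_ι_eq (X : C) (j j' : ι) :
    colimit.ι ((Functor.const ι).obj X) j = colimit.ι ((Functor.const ι).obj X) j' := by
  obtain ⟨k, h1, h2⟩ := directed_of (· ≤ ·) j j'
  rw [← colimit.w ((Functor.const ι).obj X) (homOfLE h1),
      ← colimit.w ((Functor.const ι).obj X) (homOfLE h2)]
  simp

lemma isIso_constDesc (X : C) : IsIso (colimit.desc _ (constCocone (ι := ι) X)) := by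
  refine ⟨colimit.ι ((Functor.const ι).obj X) (Classical.arbitrary ι), ?_, ?_⟩
  · apply colimit.hom_ext
    intro j
    simp [constCocone, const_ι_eq X j (Classical.arbitrary ι)]
  · simp [constCocone]

variable {F : ι ⥤ C} (c : Cocone F)

lemma desc_eq_map_comp :
    colimit.desc F c =
      colim.map c.ι ≫ colimit.desc _ (constCocone (ι := ι) c.pt) := by
  apply colimit.hom_ext
  intro j
  simp [constCocone]

theorem mono_desc [hm : ∀ i, Mono (c.ι.app i)] : Mono (colimit.desc F c) := by
  haveI : Mono c.ι := NatTrans.mono_of_mono_app c.ι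
  haveI := isIso_constDesc (ι := ι) c.pt
  rw [desc_eq_map_comp]
  have : Mono (colim.map c.ι) := colim.map_mono c.ι
  exact @mono_comp _ _ _ _ _ _ this _ (@IsIso.mono_of_iso _ _ _ _ _ (isIso_constDesc (ι := ι) c.pt))

theorem isLUB_desc [hm : ∀ i, Mono (c.ι.app i)] :
    IsLUB (Set.range fun i => Subobject.mk (c.ι.app i))
      (@Subobject.mk _ _ _ _ (colimit.desc F c) (mono_desc c)) := by
  haveI := mono_desc c
  constructor
  · rintro _ ⟨i, rfl⟩
    exact Subobject.mk_le_mk_of_comm (colimit.ι F i) (colimit.ι_desc c i)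
  · intro b hb
    have hble : ∀ i, Subobject.mk (c.ι.app i) ≤ b := fun i => hb ⟨i, rfl⟩
    let d : Cocone F :=
      { pt := (b : C)
        ι :=
          { app := fun i => Subobject.ofMkLE (c.ι.app i) b (hble i)
            naturality := fun i j h => by
              rw [← cancel_mono b.arrow]
              simp [Subobject.ofMkLE_arrow, c.w h] } }
    refine Subobject.mk_le_of_comm (colimit.desc F d) ?_
    apply colimit.hom_ext
    intro i
    simp [d, Subobject.ofMkLE_arrow]

end ColimitLemma

theorem mk_pullback_inf {M Pc A : C} (p : Pc ⟶ M) (h : A ⟶ M) [Mono p] [Mono h] :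
    Subobject.mk (pullback.snd p h ≫ h) = Subobject.mk p ⊓ Subobject.mk h := by
  apply le_antisymm
  · refine le_inf ?_ ?_
    · exact Subobject.mk_le_mk_of_comm (pullback.fst p h) pullback.condition
    · exact Subobject.mk_le_mk_of_comm (pullback.snd p h) rfl
  · set W := Subobject.mk p ⊓ Subobject.mk h with hW
    have h1 : W ≤ Subobject.mk p := inf_le_left
    have h2 : W ≤ Subobject.mk h := inf_le_right
    have w1 := Subobject.ofLEMk_comp h1
    have w2 := Subobject.ofLEMk_comp h2
    refine Subobject.le_mk_of_comm
      (pullback.lift (Subobject.ofLEMk W p h1) (Subobject.ofLEMk W h h2)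
        (by rw [w1, w2])) ?_
    rw [← Category.assoc, pullback.lift_snd, w2]

section Distrib

variable {ι : Type v} [Preorder ι] [IsDirected ι (· ≤ ·)] [Nonempty ι]

/-- The directed-union functor associated to a monotone family of subobjects. -/
@[simps]
noncomputable def famFunctor {M : C} (ψ : ι → Subobject M) (hψ : Monotone ψ) : ι ⥤ C where
  obj i := ((ψ i : Subobject M) : C)
  map {i j} h := Subobject.ofLE _ _ (hψ (leOfHom h))
  map_id i := Subobject.ofLE_refl _
  map_comp {i j k} f g := (Subobject.ofLE_comp_ofLE _ _ _ _ _).symm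

/-- The canonical cocone on `famFunctor` with point `M`. -/
@[simps]
noncomputable def famCocone {M : C} (ψ : ι → Subobject M) (hψ : Monotone ψ) : Cocone (famFunctor ψ hψ) where
  pt := M
  ι := { app := fun i => (ψ i).arrow
         naturality := fun i j h => by simp [famFunctor] }

theorem sSup_range_eq_mk {M : C} (ψ : ι → Subobject M) (hψ : Monotone ψ) :
    sSup (Set.range ψ) =
      haveI : ∀ i, Mono ((famCocone ψ hψ).ι.app i) :=
        fun i => show Mono (ψ i).arrow from inferInstance
      @Subobject.mk _ _ _ _ (colimit.desc _ (famCocone ψ hψ)) (mono_desc _) := by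
  haveI : ∀ i, Mono ((famCocone ψ hψ).ι.app i) :=
    fun i => show Mono (ψ i).arrow from inferInstance
  have h := isLUB_desc (famCocone ψ hψ)
  have he : (fun i => Subobject.mk ((famCocone ψ hψ).ι.app i)) = ψ :=
    funext fun i => Subobject.mk_arrow (ψ i)
  rw [he] at h
  exact h.sSup_eq

theorem inf_sSup_range {M : C} (ψ : ι → Subobject M) (hψ : Monotone ψ) (P : Subobject M) :
    P ⊓ sSup (Set.range ψ) = sSup (Set.range fun i => P ⊓ ψ i) := by
  classical
  set F := famFunctor ψ hψ with hF
  set c := famCocone ψ hψ with hc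
  haveI : ∀ i, Mono (c.ι.app i) := fun i => show Mono (ψ i).arrow from inferInstance
  set m : colimit F ⟶ M := colimit.desc F c with hm
  haveI : Mono m := mono_desc c
  set η : (Functor.const ι).obj ((P : C)) ⟶ (Functor.const ι).obj M :=
    (Functor.const ι).map P.arrow with hη
  haveI hηm : ∀ i, Mono (η.app i) := fun i => show Mono P.arrow from inferInstance
  set ν : F ⟶ (Functor.const ι).obj M := c.ι with hν
  haveI hνm : ∀ i, Mono (ν.app i) := fun i => show Mono (ψ i).arrow from inferInstance
  set X := pullback η ν with hX
  set c' : Cocone X := ⟨M, pullback.snd η ν ≫ ν⟩ with hc'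
  have happ : ∀ i, c'.ι.app i = (pullback.snd η ν).app i ≫ (ψ i).arrow := fun i => rfl
  have evmono : ∀ i, Mono ((pullback.snd η ν).app i) := by
    intro i
    have h2 := PreservesPullback.iso_hom_snd ((evaluation ι C).obj i) η ν
    rw [show ((evaluation ι C).obj i).map (pullback.snd η ν)
        = (pullback.snd η ν).app i from rfl] at h2
    rw [← h2]
    exact mono_comp _ _
  haveI : ∀ i, Mono (c'.ι.app i) := fun i => by
    rw [happ i]; haveI := evmono i; exact @mono_comp _ _ _ _ _ _ this _ (Subobject.arrow_mono (ψ i))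
  set n := colimit.desc X c' with hn
  haveI : Mono n := mono_desc c'
  have hsup1 : sSup (Set.range ψ) = Subobject.mk m := sSup_range_eq_mk ψ hψ
  have hsup2 : sSup (Set.range fun i => P ⊓ ψ i) = Subobject.mk n := by
    have h := isLUB_desc c'
    have he : (fun i => Subobject.mk (c'.ι.app i)) = fun i => P ⊓ ψ i := by
      funext i
      haveI := evmono i
      have e1 : Subobject.mk (c'.ι.app i)
          = Subobject.mk (pullback.snd (η.app i) (ν.app i) ≫ ν.app i) :=
        Subobject.mk_eq_mk_of_comm _ _
          (PreservesPullback.iso ((evaluation ι C).obj i) η ν)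
          (by
            have hh := PreservesPullback.iso_hom_snd ((evaluation ι C).obj i) η ν
            rw [show pullback.snd (η.app i) (ν.app i)
                = pullback.snd (((evaluation ι C).obj i).map η)
                    (((evaluation ι C).obj i).map ν) from rfl]
            rw [← Category.assoc, hh]
            rfl)
      rw [e1, mk_pullback_inf (η.app i) (ν.app i)]
      congr 1
      · exact Subobject.mk_arrow P
      · exact Subobject.mk_arrow (ψ i)
    rw [he] at h
    exact h.sSup_eq
  apply le_antisymm
  · rw [hsup1, hsup2]
    have e2 : Subobject.mk (pullback.snd P.arrow m ≫ m) = P ⊓ Subobject.mk m := by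
      rw [mk_pullback_inf P.arrow m, Subobject.mk_arrow]
    rw [← e2]
    set tP : colimit ((Functor.const ι).obj (P : C)) ⟶ (P : C) := colimit.desc _ (constCocone (ι := ι) ((P : C))) with htP
    set tM : colimit ((Functor.const ι).obj M) ⟶ M := colimit.desc _ (constCocone (ι := ι) M) with htM
    haveI : IsIso tP := isIso_constDesc (ι := ι) ((P : C))
    haveI : IsIso tM := isIso_constDesc (ι := ι) M
    have h1 : colim.map ν ≫ tM = m := by
      apply colimit.hom_ext; intro j
      exact congrArg (fun q => colimit.ι F j ≫ q) (desc_eq_map_comp c).symm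
    have h2 : colim.map η ≫ tM = tP ≫ P.arrow := by
      apply colimit.hom_ext; intro j
      simp [constCocone, hη, htM, htP]
    have cond : (pullback.fst P.arrow m ≫ inv tP) ≫ colim.map η
        = pullback.snd P.arrow m ≫ colim.map ν := by
      rw [← cancel_mono tM]
      simp only [Category.assoc]
      rw [h1, h2]
      simp only [IsIso.inv_hom_id_assoc]
      exact pullback.condition
    set β := pullback.lift _ _ cond with hβ
    have h3 : n = colim.map (pullback.snd η ν) ≫ m := by
      apply colimit.hom_ext; intro j
      erw [colim_map, ι_colimMap_assoc, colimit.ι_desc, hm, colimit.ι_desc]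
      rfl
    refine Subobject.mk_le_mk_of_comm (β ≫ (PreservesPullback.iso colim η ν).inv) ?_
    rw [Category.assoc, h3, PreservesPullback.iso_inv_snd_assoc,
        ← Category.assoc, hβ, pullback.lift_snd]
  · apply sSup_le
    rintro _ ⟨i, rfl⟩
    exact le_inf inf_le_left (le_trans inf_le_right (le_sSup ⟨i, rfl⟩))

end Distrib

section SetVersions

variable {M : C}

theorem exists_monotone_range_eq (S : Set (Subobject M)) (hne : S.Nonempty)
    (hdir : DirectedOn (· ≤ ·) S) :
    ∃ (ι : Type v) (_i1 : Preorder ι) (ψ : ι → Subobject M),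
      IsDirected ι (· ≤ ·) ∧ Nonempty ι ∧ Monotone ψ ∧ Set.range ψ = S := by
  haveI : Small.{v} ↥S := inferInstance
  let e := (equivShrink ↥S).symm
  letI : Preorder (Shrink.{v} ↥S) :=
    Preorder.lift (fun a => ((e a : ↥S) : Subobject M))
  refine ⟨Shrink.{v} ↥S, inferInstance, fun a => ((e a : ↥S) : Subobject M), ?_, ?_,
    fun _ _ h => h, ?_⟩
  · constructor
    intro a b
    obtain ⟨z, hz, h1, h2⟩ := hdir _ (e a).2 _ (e b).2
    refine ⟨equivShrink ↥S ⟨z, hz⟩, ?_, ?_⟩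
    · show ((e ((equivShrink ↥S) ⟨z, hz⟩) : ↥S) : Subobject M) ≥ _
      simpa [e] using h1
    · show ((e ((equivShrink ↥S) ⟨z, hz⟩) : ↥S) : Subobject M) ≥ _
      simpa [e] using h2
  · exact ⟨equivShrink ↥S ⟨hne.some, hne.some_mem⟩⟩
  · ext x
    constructor
    · rintro ⟨a, rfl⟩
      exact (e a).2
    · intro hx
      exact ⟨equivShrink ↥S ⟨x, hx⟩, by simp [e]⟩

theorem inf_sSup_of_directedOn (S : Set (Subobject M)) (hne : S.Nonempty)
    (hdir : DirectedOn (· ≤ ·) S) (P : Subobject M) :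
    P ⊓ sSup S = sSup ((fun T => P ⊓ T) '' S) := by
  obtain ⟨ι, _i1, ψ, hd, hn, hmono, hrange⟩ := exists_monotone_range_eq S hne hdir
  haveI := hd
  haveI := hn
  rw [← hrange, inf_sSup_range ψ hmono P, ← Set.range_comp]
  rfl

end SetVersions

section FinGen

variable {M : C}

theorem finGenObj_of_iso {X Y : C} (e : X ≅ Y) (hX : FinGenObj X) : FinGenObj Y := by
  intro S hne hdir hsup
  let ψ := Subobject.mapIsoToOrderIso e
  have h := hX (ψ.symm '' S) (hne.image _) ?_ ?_
  · obtain ⟨x, hx, hxe⟩ := h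
    have : x = ψ ⊤ := by
      rw [← hxe, OrderIso.apply_symm_apply]
    rw [this] at hx
    rwa [show ψ ⊤ = ⊤ from ψ.map_top] at hx
  · rintro _ ⟨a, ha, rfl⟩ _ ⟨b, hb, rfl⟩
    obtain ⟨z, hz, h1, h2⟩ := hdir a ha b hb
    exact ⟨ψ.symm z, ⟨z, hz, rfl⟩, ψ.symm.monotone h1, ψ.symm.monotone h2⟩
  · have hl : IsLUB (⇑ψ.symm '' S) (ψ.symm ⊤) :=
      (OrderIso.isLUB_image' (f := ψ.symm)).mpr (hsup ▸ isLUB_sSup S)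
    exact hl.sSup_eq.trans ψ.symm.map_top

/-- Relative version of finite generation. -/
theorem finGenObj_underlying_iff (R : Subobject M) :
    FinGenObj (R : C) ↔
      ∀ S : Set (Subobject M), S.Nonempty → DirectedOn (· ≤ ·) S →
        (∀ T ∈ S, T ≤ R) → sSup S = R → R ∈ S := by
  set ψ := Subobject.subobjectOrderIso R with hψ
  have hψtop : ψ ⊤ = ⟨R, le_refl R⟩ := by
    apply Subtype.ext
    show Subobject.mk ((⊤ : Subobject (R : C)).arrow ≫ R.arrow) = R
    have : Subobject.mk ((⊤ : Subobject (R : C)).arrow ≫ R.arrow)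
        = Subobject.mk R.arrow :=
      Subobject.mk_eq_mk_of_comm _ _ (asIso (⊤ : Subobject (R : C)).arrow) rfl
    rw [this, Subobject.mk_arrow]
  constructor
  · intro h S hne hdir hle hsup
    set S0 : Set (Set.Iic R) := {x | (x : Subobject M) ∈ S} with hS0
    set S' : Set (Subobject (R : C)) := ψ ⁻¹' S0 with hS'
    have hmem : ∀ x : Subobject (R : C), x ∈ S' ↔ ((ψ x : Set.Iic R) : Subobject M) ∈ S :=
      fun x => Iff.rfl
    have h1 : ⊤ ∈ S' := by
      apply h S' ?_ ?_ ?_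
      · obtain ⟨T, hT⟩ := hne
        exact ⟨ψ.symm ⟨T, hle T hT⟩, by
          rw [hmem, OrderIso.apply_symm_apply]; exact hT⟩
      · intro a ha b hb
        rw [hmem] at ha hb
        obtain ⟨z, hz, hz1, hz2⟩ := hdir _ ha _ hb
        refine ⟨ψ.symm ⟨z, hle z hz⟩, by rw [hmem, OrderIso.apply_symm_apply]; exact hz, ?_, ?_⟩
        · rw [← ψ.symm_apply_apply a]
          exact ψ.symm.monotone (Subtype.mk_le_mk.mpr hz1)
        · rw [← ψ.symm_apply_apply b]
          exact ψ.symm.monotone (Subtype.mk_le_mk.mpr hz2)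
      · -- sSup S' = ⊤
        apply IsLUB.sSup_eq
        have himg : ψ '' S' = S0 := Set.image_preimage_eq S0 ψ.surjective
        have hlub : IsLUB S0 ⟨R, le_refl R⟩ := by
          constructor
          · intro x hx
            exact x.2
          · intro b hb
            refine Subtype.mk_le_mk.mpr ?_
            refine le_trans (le_of_eq hsup.symm) (sSup_le ?_)
            intro T hT
            exact Subtype.mk_le_mk.mp (hb (show (⟨T, hle T hT⟩ : Set.Iic R) ∈ S0 from hT))
        rw [← hψtop] at hlub
        rw [← himg] at hlub
        exact (OrderIso.isLUB_image' (f := ψ)).mp hlub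
    rw [hmem, hψtop] at h1
    exact h1
  · intro h S hne hdir hsup
    set S'' : Set (Subobject M) := (fun x => ((ψ x : Set.Iic R) : Subobject M)) '' S with hS''
    have h2 : R ∈ S'' := by
      apply h S'' (hne.image _) ?_ ?_ ?_
      · rintro _ ⟨a, ha, rfl⟩ _ ⟨b, hb, rfl⟩
        obtain ⟨z, hz, h1, h2⟩ := hdir a ha b hb
        exact ⟨((ψ z : Set.Iic R) : Subobject M), ⟨z, hz, rfl⟩,
          Subtype.mk_le_mk.mp (ψ.monotone h1), Subtype.mk_le_mk.mp (ψ.monotone h2)⟩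
      · rintro _ ⟨a, _, rfl⟩
        exact (ψ a).2
      · -- sSup S'' = R
        apply IsLUB.sSup_eq
        have hlub : IsLUB S ⊤ := hsup ▸ isLUB_sSup S
        have hlub2 : IsLUB (ψ '' S) (ψ ⊤) := (OrderIso.isLUB_image' (f := ψ)).mpr hlub
        rw [hψtop] at hlub2
        constructor
        · rintro _ ⟨a, ha, rfl⟩
          exact Subtype.mk_le_mk.mp (hlub2.1 ⟨a, ha, rfl⟩)
        · intro b hb
          have : (⟨b ⊓ R, by simp⟩ : Set.Iic R) ∈ upperBounds (ψ '' S) := by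
            rintro _ ⟨a, ha, rfl⟩
            refine Subtype.mk_le_mk.mpr (le_inf ?_ (ψ a).2)
            exact hb ⟨a, ha, rfl⟩
          have := hlub2.2 this
          exact le_trans (Subtype.mk_le_mk.mp this) inf_le_left
    obtain ⟨x, hx, hxR⟩ := h2
    have : ψ x = ⟨R, le_refl R⟩ := Subtype.ext hxR
    rw [← hψtop] at this
    rwa [ψ.injective this] at hx

theorem finGen_le_of_inf_directed {P : Subobject M} (hP : FinGenObj (P : C))
    (S : Set (Subobject M)) (hne : S.Nonempty) (hdir : DirectedOn (· ≤ ·) S)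
    (hle : P ≤ sSup S) : ∃ T ∈ S, P ≤ T := by
  have key := (finGenObj_underlying_iff P).mp hP ((fun T => P ⊓ T) '' S)
    (hne.image _) ?_ ?_ ?_
  · obtain ⟨T, hT, hPT⟩ := key
    exact ⟨T, hT, by rw [← hPT]; exact inf_le_right⟩
  · rintro _ ⟨a, ha, rfl⟩ _ ⟨b, hb, rfl⟩
    obtain ⟨z, hz, h1, h2⟩ := hdir a ha b hb
    exact ⟨P ⊓ z, ⟨z, hz, rfl⟩, inf_le_inf_left P h1, inf_le_inf_left P h2⟩
  · rintro _ ⟨a, _, rfl⟩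
    exact inf_le_left
  · rw [← inf_sSup_of_directedOn S hne hdir P]
    exact inf_eq_left.mpr hle

theorem finGen_sup {P Q : Subobject M} (hP : FinGenObj (P : C)) (hQ : FinGenObj (Q : C)) :
    FinGenObj ((P ⊔ Q : Subobject M) : C) := by
  rw [finGenObj_underlying_iff]
  intro S hne hdir hle hsup
  obtain ⟨T1, hT1, hPT1⟩ := finGen_le_of_inf_directed hP S hne hdir
    (hsup ▸ le_sup_left)
  obtain ⟨T2, hT2, hQT2⟩ := finGen_le_of_inf_directed hQ S hne hdir
    (hsup ▸ le_sup_right)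
  obtain ⟨z, hz, h1, h2⟩ := hdir T1 hT1 T2 hT2
  have : z = P ⊔ Q := le_antisymm (hle z hz) (sup_le (le_trans hPT1 h1) (le_trans hQT2 h2))
  rwa [← this]

end FinGen

section Main

theorem mono_split (I : C) (hIfg : FinGenObj I)
    (A1 : ∀ X : C, sSup {P : Subobject X | FinGenObj (P : C)} = ⊤)
    (hsplit : ∀ (M : C) (f : I ⟶ M), FinGenObj M → Mono f → ∃ r : M ⟶ I, f ≫ r = 𝟙 I)
    (M : C) (f : I ⟶ M) [Mono f] : ∃ r : M ⟶ I, f ≫ r = 𝟙 I := by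
  classical
  set J := Subobject.mk f with hJ
  set 𝒩 : Set (Subobject M) := {N | J ⊓ N = ⊥} with h𝒩
  have hZorn : ∃ N, Maximal (· ∈ 𝒩) N := by
    apply zorn_le₀
    intro ch hch hchain
    rcases Set.eq_empty_or_nonempty ch with hc | hc
    · exact ⟨⊥, show J ⊓ ⊥ = ⊥ from inf_bot_eq J, by simp [hc]⟩
    · refine ⟨sSup ch, ?_, fun z hz => le_sSup hz⟩
      show J ⊓ sSup ch = ⊥
      rw [inf_sSup_of_directedOn ch hc hchain.directedOn]
      apply le_bot_iff.mp
      apply sSup_le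
      rintro _ ⟨T, hT, rfl⟩
      exact le_of_eq (hch hT)
  obtain ⟨N, hN⟩ := hZorn
  have hNmem : J ⊓ N = ⊥ := hN.prop
  have hNmax : ∀ z, J ⊓ z = ⊥ → N ≤ z → z = N := fun z hz hle =>
    le_antisymm (hN.le_of_ge hz hle) hle
  set E := cokernel N.arrow with hE
  set π : M ⟶ E := cokernel.π N.arrow with hπ
  set g : I ⟶ E := f ≫ π with hg
  have hgmono : Mono g := by
    apply Preadditive.mono_of_cancel_zero
    intro Z z hz
    have hzero : (z ≫ f) ≫ π = 0 := by rw [Category.assoc]; exact hz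
    have hJf : J.Factors (z ≫ f) := (Subobject.mk_factors_iff f (z ≫ f)).mpr ⟨z, rfl⟩
    have hNf : N.Factors (z ≫ f) :=
      (Subobject.factors_iff _ _).mpr ⟨Abelian.monoLift N.arrow (z ≫ f) hzero,
        Abelian.monoLift_comp N.arrow (z ≫ f) hzero⟩
    have hbot : ((⊥ : Subobject M)).Factors (z ≫ f) := by
      rw [← hNmem]
      exact (Subobject.inf_factors _).mpr ⟨hJf, hNf⟩
    have : z ≫ f = 0 := (Subobject.bot_factors_iff_zero _).mp hbot
    exact zero_of_comp_mono f this
  haveI := hgmono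
  set J' := Subobject.mk g with hJ'
  -- essentiality of J' in E
  have hess : ∀ T : Subobject E, T ⊓ J' = ⊥ → T = ⊥ := by
    intro T hT
    set T' := Subobject.mk (pullback.snd T.arrow π) with hT'def
    have hNT' : N ≤ T' := by
      refine Subobject.le_mk_of_comm (pullback.lift 0 N.arrow ?_) (pullback.lift_snd _ _ _)
      rw [zero_comp, cokernel.condition]
    have hJT' : J ⊓ T' = ⊥ := by
      set W := J ⊓ T' with hW
      have h1 : W ≤ J := inf_le_left
      have h2 : W ≤ T' := inf_le_right
      have hwT : T.Factors (W.arrow ≫ π) := by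
        have hcomp : (Subobject.ofLEMk W (pullback.snd T.arrow π) h2
            ≫ pullback.fst T.arrow π) ≫ T.arrow = W.arrow ≫ π := by
          rw [Category.assoc, pullback.condition, ← Category.assoc, Subobject.ofLEMk_comp]
        exact (Subobject.factors_iff _ _).mpr ⟨_, hcomp⟩
      have hwJ' : J'.Factors (W.arrow ≫ π) := by
        refine (Subobject.mk_factors_iff g _).mpr ⟨@Subobject.ofLEMk _ _ _ _ W f ‹Mono f› h1, ?_⟩
        show Subobject.ofLEMk W f h1 ≫ f ≫ π = W.arrow ≫ π
        rw [← Category.assoc, Subobject.ofLEMk_comp]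
      have hbot : ((⊥ : Subobject E)).Factors (W.arrow ≫ π) := by
        rw [← hT]
        exact (Subobject.inf_factors _).mpr ⟨hwT, hwJ'⟩
      have hzero : W.arrow ≫ π = 0 := (Subobject.bot_factors_iff_zero _).mp hbot
      have hWN : W ≤ N :=
        Subobject.le_of_comm (Abelian.monoLift N.arrow W.arrow hzero)
          (Abelian.monoLift_comp N.arrow W.arrow hzero)
      have : W ≤ ⊥ := hNmem ▸ le_inf h1 hWN
      exact le_bot_iff.mp this
    have hT'N : T' = N := hNmax T' hJT' hNT'
    have hsndπ : pullback.snd T.arrow π ≫ π = 0 := by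
      have hω : Subobject.ofMkLE (pullback.snd T.arrow π) N (le_of_eq hT'N) ≫ N.arrow
          = pullback.snd T.arrow π := Subobject.ofMkLE_arrow (le_of_eq hT'N)
      rw [← hω, Category.assoc, cokernel.condition, comp_zero]
    have hfstT : pullback.fst T.arrow π ≫ T.arrow = 0 := by
      rw [pullback.condition, hsndπ]
    have : T.arrow = 0 := zero_of_epi_comp (pullback.fst T.arrow π) hfstT
    rw [← Subobject.mk_arrow T]
    exact Subobject.mk_eq_bot_iff_zero.mpr this
  -- every finitely generated subobject of E is contained in J'
  have hJ'fg : FinGenObj ((J' : Subobject E) : C) :=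
    finGenObj_of_iso (Subobject.underlyingIso g).symm hIfg
  have hQle : ∀ Q : Subobject E, FinGenObj (Q : C) → Q ≤ J' := by
    intro Q hQ
    set R := Q ⊔ J' with hR
    have hRfg : FinGenObj (R : C) := finGen_sup hQ hJ'fg
    set σ : I ⟶ (R : C) :=
      (Subobject.underlyingIso g).inv ≫ Subobject.ofLE J' R le_sup_right with hσ
    have hσarr : σ ≫ R.arrow = g := by
      rw [hσ, Category.assoc, Subobject.ofLE_arrow, Subobject.underlyingIso_arrow]
    haveI : Mono σ := mono_comp _ _
    obtain ⟨r, hr⟩ := hsplit (R : C) σ hRfg inferInstance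
    have hrmono : Mono r := by
      apply Abelian.mono_of_kernel_ι_eq_zero
      set κ := kernel.ι r with hκdef
      set K := Subobject.mk (κ ≫ R.arrow) with hKdef
      have hK : K ⊓ J' = ⊥ := by
        set W := K ⊓ J' with hW
        have h1 : W ≤ K := inf_le_left
        have h2 : W ≤ J' := inf_le_right
        have ha : Subobject.ofLEMk W (κ ≫ R.arrow) h1 ≫ κ ≫ R.arrow = W.arrow :=
          Subobject.ofLEMk_comp h1
        have hb : Subobject.ofLEMk W g h2 ≫ g = W.arrow := Subobject.ofLEMk_comp h2
        have hab : Subobject.ofLEMk W (κ ≫ R.arrow) h1 ≫ κ = Subobject.ofLEMk W g h2 ≫ σ := by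
          rw [← cancel_mono R.arrow, Category.assoc, Category.assoc, hσarr]
          rw [ha, hb]
        have hb0 : Subobject.ofLEMk W g h2 = 0 := by
          have := congrArg (fun q => q ≫ r) hab
          simpa [hκdef, Category.assoc, kernel.condition, hr] using this.symm
        have : W.arrow = 0 := by rw [← hb, hb0, zero_comp]
        rw [← Subobject.mk_arrow W]
        exact Subobject.mk_eq_bot_iff_zero.mpr this
      have hK0 : K = ⊥ := hess K hK
      have : κ ≫ R.arrow = 0 := Subobject.mk_eq_bot_iff_zero.mp hK0
      exact zero_of_comp_mono R.arrow this
    haveI := hrmono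
    haveI : IsSplitEpi r := ⟨⟨⟨σ, hr⟩⟩⟩
    haveI : IsIso r := isIso_of_mono_of_epi r
    haveI : IsIso σ := by
      refine ⟨r, hr, ?_⟩
      rw [← cancel_mono r, Category.assoc, hr, Category.comp_id, Category.id_comp]
    have hRJ : R ≤ J' :=
      Subobject.le_mk_of_comm (inv σ) (by rw [← hσarr, IsIso.inv_hom_id_assoc])
    exact le_trans le_sup_left hRJ
  have hJ'top : J' = ⊤ := by
    have hsle : sSup {P : Subobject E | FinGenObj (P : C)} ≤ J' :=
      sSup_le fun Q hQ => hQle Q hQ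
    rw [A1 E] at hsle
    exact le_antisymm le_top hsle
  haveI : IsIso g := (Subobject.isIso_iff_mk_eq_top g).mpr hJ'top
  refine ⟨π ≫ inv g, ?_⟩
  rw [← Category.assoc]
  exact IsIso.hom_inv_id g

end Main

end Stmt8Aux

/-- In a `k`-linear Grothendieck abelian category in which every object is
the union of its finitely generated subobjects, a finitely generated object `I` such that
every monomorphism from `I` into a finitely generated object splits is injective. -/
theorem stmt_8 {k : Type*} [Field k] {C : Type u} [Category.{v} C] [Abelian C]
    [Linear k C] [HasLimits C] [HasColimits C] [AB5 C] [WellPowered.{v} C]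
    (Gsep : C) (hsep : IsSeparator Gsep)
    (A1 : ∀ X : C, Subobject.sSup.{v} {P : Subobject X | FinGenObj (P : C)} = ⊤)
    (I : C) (hIfg : FinGenObj I)
    (hsplit : ∀ (M : C) (f : I ⟶ M), FinGenObj M → Mono f → ∃ r : M ⟶ I, f ≫ r = 𝟙 I) :
    Injective I := by
  constructor
  intro X Y u i hi
  haveI := hi
  haveI : Mono (pushout.inr i u) := Abelian.mono_pushout_of_mono_f i u
  obtain ⟨r, hr⟩ := Stmt8Aux.mono_split I hIfg A1 hsplit (pushout i u) (pushout.inr i u)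
  refine ⟨pushout.inl i u ≫ r, ?_⟩
  rw [← Category.assoc, pushout.condition, Category.assoc, hr, Category.comp_id]
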